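/- Let m ≥ 1 and let F be a polynomial in m variables with rational coefficients that is irreducible over ℚ. Suppose there exists a point p ∈ ℚ^m such that F(p) = 0 and some partial derivative ∂F/∂x_i does not vanish at p (i.e., p is a smooth ℚ-rational point of the hypersurface F = 0). Then the image of F in ℂ[x_1,…,x_m], obtained by applying the inclusion ℚ → ℂ to each coefficient, is irreducible over ℂ. -/

import Mathlib

open MvPolynomial

lemma MvAux.isUnit_eq_C {R : Type*} [CommRing R] [IsDomain R] :
    ∀ {n : ℕ} (q : MvPolynomial (Fin n) R), IsUnit q → ∃ r : R, IsUnit r ∧ q = C r := by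
  intro n
  induction n with
  | zero =>
    intro q hq
    refine ⟨q.coeff 0, ?_, eq_C_of_isEmpty q⟩
    have := hq.map (constantCoeff (σ := Fin 0) (R := R))
    simpa [constantCoeff_eq] using this
  | succ n ih =>
    intro q hq
    have hq' : IsUnit (finSuccEquiv R n q) := hq.map (finSuccEquiv R n) 
    obtain ⟨a, ha, hCa⟩ := Polynomial.isUnit_iff.mp hq'
    obtain ⟨r, hr, rfl⟩ := ih a ha
    refine ⟨r, hr, ?_⟩
    have h2 : q = (finSuccEquiv R n).symm (Polynomial.C (C r)) := by
      rw [hCa, AlgEquiv.symm_apply_apply]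
    rw [h2]
    exact RingHom.congr_fun (finSuccEquiv_comp_C_eq_C n) r

lemma MvAux.isUnit_iff_C {n : ℕ} {F : Type*} [Field F] (q : MvPolynomial (Fin n) F) :
    IsUnit q ↔ ∃ c : F, c ≠ 0 ∧ q = C c := by
  constructor
  · intro h
    obtain ⟨r, hr, rfl⟩ := MvAux.isUnit_eq_C q h
    exact ⟨r, hr.ne_zero, rfl⟩
  · rintro ⟨c, hc, rfl⟩
    exact (hc.isUnit).map (C : F →+* MvPolynomial (Fin n) F)

lemma MvAux.exists_coeff_ne_zero {n : ℕ} {F : Type*} [Field F] (q : MvPolynomial (Fin n) F)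
    (h0 : q ≠ 0) (hu : ¬ IsUnit q) : ∃ d, d ≠ 0 ∧ coeff d q ≠ 0 := by
  by_contra h
  push_neg at h
  have hq : q = C (coeff 0 q) := by
    ext d
    rcases eq_or_ne d 0 with rfl | hd
    · simp
    · rw [coeff_C, if_neg (Ne.symm hd)]
      exact h d hd
  apply hu
  rw [MvAux.isUnit_iff_C]
  refine ⟨coeff 0 q, fun hc => h0 ?_, hq⟩
  rw [hq, hc, map_zero]

lemma MvAux.exists_point {σ : Type*} [Finite σ] {K : Type*} [Field K] [IsAlgClosed K]
    {L : Type*} [CommRing L] [Nontrivial L] (ι : K →+* L) (x : σ → L)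
    (S : Set (MvPolynomial σ K)) (hx : ∀ c ∈ S, eval₂ ι x c = 0) :
    ∃ y : σ → K, ∀ c ∈ S, eval y c = 0 := by
  by_contra h
  push_neg at h
  have hzl : MvPolynomial.zeroLocus K (Ideal.span S) = ∅ := by
    ext y
    simp only [Set.mem_empty_iff_false, iff_false]
    intro hy
    obtain ⟨c, hcS, hc⟩ := h y
    exact hc (hy c (Ideal.subset_span hcS))
  have hrad : (Ideal.span S).radical = ⊤ := by
    rw [← vanishingIdeal_zeroLocus_eq_radical (K := K), hzl]
    exact vanishingIdeal_empty
  have hsp : (Ideal.span S) = ⊤ := by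
    rwa [Ideal.radical_eq_top] at hrad
  have h1 : (1 : MvPolynomial σ K) ∈ Ideal.span S := hsp ▸ Submodule.mem_top
  have key : ∀ z ∈ Ideal.span S, eval₂Hom ι x z = 0 := by
    intro z hz
    induction hz using Submodule.span_induction with
    | mem c hc => exact hx c hc
    | zero => simp
    | add a b _ _ ha hb => simp only [map_add] at *; simp [ha, hb]
    | smul r a _ ha => simp only [smul_eq_mul, map_mul] at *; simp [ha]
  have := key 1 h1
  simp at this

lemma MvAux.map_genSum {m : ℕ} {R T : Type*} [CommSemiring R] [CommSemiring T] (θ : R →+* T)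
    (s : Finset (Fin m →₀ ℕ)) (v : {d // d ∈ s} → R) :
    MvPolynomial.map θ (∑ d ∈ s.attach, monomial d.1 (v d)) =
      ∑ d ∈ s.attach, monomial d.1 (θ (v d)) := by
  rw [map_sum]
  refine Finset.sum_congr rfl fun d _ => ?_
  rw [map_monomial]

lemma MvAux.coeff_genSum {m : ℕ} {R : Type*} [CommSemiring R]
    (s : Finset (Fin m →₀ ℕ)) (v : {d // d ∈ s} → R) {e : Fin m →₀ ℕ} (he : e ∈ s) :
    coeff e (∑ d ∈ s.attach, monomial d.1 (v d)) = v ⟨e, he⟩ := by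
  classical
  rw [coeff_sum]
  rw [Finset.sum_eq_single (⟨e, he⟩ : {d // d ∈ s})]
  · rw [coeff_monomial, if_pos rfl]
  · intro b _ hb
    rw [coeff_monomial, if_neg]
    intro hbe
    exact hb (Subtype.ext hbe)
  · intro habs
    exact absurd (Finset.mem_attach _ _) habs

lemma MvAux.genSum_eq {m : ℕ} {R : Type*} [CommSemiring R] (A : MvPolynomial (Fin m) R) :
    ∑ d ∈ A.support.attach, monomial d.1 (coeff d.1 A) = A := by
  rw [Finset.sum_attach A.support (fun d => monomial d (coeff d A))]
  exact support_sum_monomial_coeff A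

lemma MvAux.irreducible_map {m : ℕ} {K : Type*} {L : Type*} [Field K] [IsAlgClosed K] [Field L]
    (ι : K →+* L) (G : MvPolynomial (Fin m) K) (hG : Irreducible G) :
    Irreducible (MvPolynomial.map ι G) := by
  have hinj : Function.Injective
      (MvPolynomial.map ι : MvPolynomial (Fin m) K → MvPolynomial (Fin m) L) :=
    MvPolynomial.map_injective ι ι.injective
  have hG0 : G ≠ 0 := hG.ne_zero
  have hmG0 : MvPolynomial.map ι G ≠ 0 := by
    intro h; apply hG0; apply hinj; simpa using h
  constructor
  · intro hu
    obtain ⟨c, hc, hCc⟩ := (MvAux.isUnit_iff_C _).mp hu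
    apply hG.not_isUnit
    rw [MvAux.isUnit_iff_C]
    have hGc : G = C (coeff 0 G) := by
      ext d
      rcases eq_or_ne d 0 with rfl | hd
      · simp
      · rw [coeff_C, if_neg (Ne.symm hd)]
        have h2 : ι (coeff d G) = 0 := by
          rw [← coeff_map, hCc, coeff_C, if_neg (Ne.symm hd)]
        exact ι.injective (by simpa using h2)
    exact ⟨coeff 0 G, fun h0 => hG0 (by rw [hGc, h0, map_zero]), hGc⟩
  · intro A B h
    by_contra hAB
    push_neg at hAB
    obtain ⟨hA, hB⟩ := hAB
    have hA0 : A ≠ 0 := by rintro rfl; rw [zero_mul] at h; exact hmG0 h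
    have hB0 : B ≠ 0 := by rintro rfl; rw [mul_zero] at h; exact hmG0 h
    obtain ⟨dA, hdA0, hdA⟩ := MvAux.exists_coeff_ne_zero A hA0 hA
    obtain ⟨dB, hdB0, hdB⟩ := MvAux.exists_coeff_ne_zero B hB0 hB
    have hdAmem : dA ∈ A.support := mem_support_iff.mpr hdA
    have hdBmem : dB ∈ B.support := mem_support_iff.mpr hdB
    set I : Type _ := (↥A.support ⊕ ↥B.support) ⊕ Fin 2 with hI
    set PA : MvPolynomial (Fin m) (MvPolynomial I K) :=
      ∑ d ∈ A.support.attach, monomial d.1 (X (Sum.inl (Sum.inl d))) with hPA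
    set PB : MvPolynomial (Fin m) (MvPolynomial I K) :=
      ∑ d ∈ B.support.attach, monomial d.1 (X (Sum.inl (Sum.inr d))) with hPB
    set PG : MvPolynomial (Fin m) (MvPolynomial I K) :=
      MvPolynomial.map (C : K →+* MvPolynomial I K) G with hPG
    set x : I → L := Sum.elim (Sum.elim (fun d => coeff d.1 A) (fun d => coeff d.1 B))
      ![(coeff dA A)⁻¹, (coeff dB B)⁻¹] with hx
    set S : Set (MvPolynomial I K) :=
      (Set.range fun e : (Fin m) →₀ ℕ => coeff e (PA * PB - PG)) ∪
      {X (Sum.inr 0) * X (Sum.inl (Sum.inl ⟨dA, hdAmem⟩)) - 1,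
       X (Sum.inr 1) * X (Sum.inl (Sum.inr ⟨dB, hdBmem⟩)) - 1} with hS
    -- the L-points satisfy S
    have hmapA : MvPolynomial.map (eval₂Hom ι x) PA = A := by
      rw [hPA, MvAux.map_genSum]
      have : ∀ d : {d // d ∈ A.support},
          (eval₂Hom ι x) (X (Sum.inl (Sum.inl d)) : MvPolynomial I K) = coeff d.1 A := by
        intro d; rw [eval₂Hom_X']; rfl
      rw [Finset.sum_congr rfl fun d _ => by rw [this d]]
      exact MvAux.genSum_eq A
    have hmapB : MvPolynomial.map (eval₂Hom ι x) PB = B := by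
      rw [hPB, MvAux.map_genSum]
      have : ∀ d : {d // d ∈ B.support},
          (eval₂Hom ι x) (X (Sum.inl (Sum.inr d)) : MvPolynomial I K) = coeff d.1 B := by
        intro d; rw [eval₂Hom_X']; rfl
      rw [Finset.sum_congr rfl fun d _ => by rw [this d]]
      exact MvAux.genSum_eq B
    have hmapG : MvPolynomial.map (eval₂Hom ι x) PG = MvPolynomial.map ι G := by
      rw [hPG, MvPolynomial.map_map]
      have hcomp : (eval₂Hom ι x).comp (C : K →+* MvPolynomial I K) = ι := by
        refine RingHom.ext fun r => ?_
        simp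
      rw [hcomp]
    have hSx : ∀ c ∈ S, eval₂ ι x c = 0 := by
      intro c hc
      rcases hc with ⟨e, rfl⟩ | hc
      · have : eval₂ ι x (coeff e (PA * PB - PG)) = coeff e
            (MvPolynomial.map (eval₂Hom ι x) (PA * PB - PG)) := by
          rw [coeff_map]; rfl
        rw [this, map_sub, map_mul, hmapA, hmapB, hmapG, ← h, sub_self, coeff_zero]
      · rcases hc with rfl | rfl
        · have : eval₂ ι x (X (Sum.inr 0) * X (Sum.inl (Sum.inl ⟨dA, hdAmem⟩)) - 1 :
              MvPolynomial I K) = x (Sum.inr 0) * x (Sum.inl (Sum.inl ⟨dA, hdAmem⟩)) - 1 := by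
            simp [eval₂_sub, eval₂_mul, eval₂_X, eval₂_one]
          rw [this]
          show (coeff dA A)⁻¹ * coeff dA A - 1 = 0
          rw [inv_mul_cancel₀ hdA, sub_self]
        · have : eval₂ ι x (X (Sum.inr 1) * X (Sum.inl (Sum.inr ⟨dB, hdBmem⟩)) - 1 :
              MvPolynomial I K) = x (Sum.inr 1) * x (Sum.inl (Sum.inr ⟨dB, hdBmem⟩)) - 1 := by
            simp [eval₂_sub, eval₂_mul, eval₂_X, eval₂_one]
          rw [this]
          show (coeff dB B)⁻¹ * coeff dB B - 1 = 0
          rw [inv_mul_cancel₀ hdB, sub_self]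
    obtain ⟨y, hy⟩ := MvAux.exists_point ι x S hSx
    -- build the K-factorization
    set A' : MvPolynomial (Fin m) K := MvPolynomial.map (eval y : MvPolynomial I K →+* K) PA
      with hA'
    set B' : MvPolynomial (Fin m) K := MvPolynomial.map (eval y : MvPolynomial I K →+* K) PB
      with hB'
    have hmapG' : MvPolynomial.map (eval y : MvPolynomial I K →+* K) PG = G := by
      rw [hPG, MvPolynomial.map_map]
      have : (eval y : MvPolynomial I K →+* K).comp (C : K →+* MvPolynomial I K) =
          RingHom.id K := by ext r; simp
      rw [this, MvPolynomial.map_id]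
    have hzero : MvPolynomial.map (eval y : MvPolynomial I K →+* K) (PA * PB - PG) = 0 := by
      ext e
      rw [coeff_map, coeff_zero]
      exact hy _ (Or.inl ⟨e, rfl⟩)
    have hfact : G = A' * B' := by
      rw [map_sub, map_mul, hmapG', sub_eq_zero] at hzero
      rw [← hzero, hA', hB']
    -- A' is not a unit
    have hcoeffA' : coeff dA A' = y (Sum.inl (Sum.inl ⟨dA, hdAmem⟩)) := by
      rw [hA', hPA, MvAux.map_genSum]
      have : ∀ d : {d // d ∈ A.support},
          (eval y) (X (Sum.inl (Sum.inl d)) : MvPolynomial I K) = y (Sum.inl (Sum.inl d)) := by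
        intro d; rw [eval_X]
      rw [Finset.sum_congr rfl fun d _ => by rw [this d]]
      exact MvAux.coeff_genSum _ _ hdAmem
    have hcoeffB' : coeff dB B' = y (Sum.inl (Sum.inr ⟨dB, hdBmem⟩)) := by
      rw [hB', hPB, MvAux.map_genSum]
      have : ∀ d : {d // d ∈ B.support},
          (eval y) (X (Sum.inl (Sum.inr d)) : MvPolynomial I K) = y (Sum.inl (Sum.inr d)) := by
        intro d; rw [eval_X]
      rw [Finset.sum_congr rfl fun d _ => by rw [this d]]
      exact MvAux.coeff_genSum _ _ hdBmem
    have hyA : y (Sum.inr 0) * y (Sum.inl (Sum.inl ⟨dA, hdAmem⟩)) = 1 := by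
      have := hy _ (Or.inr (Or.inl rfl))
      rw [map_sub, map_mul, eval_X, eval_X, map_one, sub_eq_zero] at this
      exact this
    have hyB : y (Sum.inr 1) * y (Sum.inl (Sum.inr ⟨dB, hdBmem⟩)) = 1 := by
      have := hy _ (Or.inr (Or.inr rfl))
      rw [map_sub, map_mul, eval_X, eval_X, map_one, sub_eq_zero] at this
      exact this
    have hA'nu : ¬ IsUnit A' := by
      intro hu
      obtain ⟨c, hc, hCc⟩ := (MvAux.isUnit_iff_C _).mp hu
      have : coeff dA A' = 0 := by rw [hCc, coeff_C, if_neg (Ne.symm hdA0)]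
      rw [hcoeffA'] at this
      rw [this, mul_zero] at hyA
      exact zero_ne_one hyA
    have hB'nu : ¬ IsUnit B' := by
      intro hu
      obtain ⟨c, hc, hCc⟩ := (MvAux.isUnit_iff_C _).mp hu
      have : coeff dB B' = 0 := by rw [hCc, coeff_C, if_neg (Ne.symm hdB0)]
      rw [hcoeffB'] at this
      rw [this, mul_zero] at hyB
      exact zero_ne_one hyB
    rcases hG.isUnit_or_isUnit hfact with hu | hu
    · exact hA'nu hu
    · exact hB'nu hu

section
open Polynomial
lemma MvAux.fixed_mem_range (x : AlgebraicClosure ℚ)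
    (h : ∀ σ : AlgebraicClosure ℚ ≃ₐ[ℚ] AlgebraicClosure ℚ, σ x = x) :
    ∃ r : ℚ, algebraMap ℚ (AlgebraicClosure ℚ) r = x := by
  classical
  have hint : IsIntegral ℚ x := ((AlgebraicClosure.isAlgebraic ℚ).isAlgebraic x).isIntegral
  set μ := minpoly ℚ x with hμ
  have hμ0 : μ ≠ 0 := minpoly.ne_zero hint
  have hsplits : Splits (μ.map (algebraMap ℚ (AlgebraicClosure ℚ))) := IsAlgClosed.splits _
  have hsep : μ.Separable := (minpoly.irreducible hint).separable
  have hroots : ∀ y ∈ (μ.map (algebraMap ℚ (AlgebraicClosure ℚ))).roots, x = y := by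
    intro y hy
    have hev : (Polynomial.aeval y) (minpoly ℚ x) = 0 := by
      have := isRoot_of_mem_roots hy
      rwa [IsRoot.def, Polynomial.eval_map, ← Polynomial.aeval_def] at this
    obtain ⟨σ, hσ⟩ := minpoly.exists_algEquiv_of_root ((AlgebraicClosure.isAlgebraic ℚ).isAlgebraic x) hev
    calc x = σ.symm x := (h σ.symm).symm
    _ = σ.symm (σ y) := by rw [hσ]
    _ = y := σ.symm_apply_apply y
  have hnodup : (μ.map (algebraMap ℚ (AlgebraicClosure ℚ))).roots.Nodup := nodup_roots hsep.map
  have hcard : (μ.map (algebraMap ℚ (AlgebraicClosure ℚ))).roots.card ≤ 1 := by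
    have h1 : (μ.map (algebraMap ℚ (AlgebraicClosure ℚ))).roots.count x = (μ.map (algebraMap ℚ (AlgebraicClosure ℚ))).roots.card :=
      Multiset.count_eq_card.mpr hroots
    rw [← h1]
    exact Multiset.nodup_iff_count_le_one.mp hnodup x
  have hnd : μ.natDegree = 1 := by
    have hle : μ.natDegree ≤ 1 := by
      rw [← natDegree_map (algebraMap ℚ (AlgebraicClosure ℚ)), ← splits_iff_card_roots.mp hsplits]; exact hcard
    exact le_antisymm hle (minpoly.natDegree_pos hint)
  have hdeg : μ.degree = 1 := by
    rw [degree_eq_natDegree hμ0, hnd]; rfl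
  have := minpoly.degree_eq_one_iff.mp hdeg
  obtain ⟨r, hr⟩ := this
  exact ⟨r, hr⟩

end

lemma MvAux.exists_preimage {σ : Type*} {K : Type*} [Field K] [Algebra ℚ K]
    (q : MvPolynomial σ K) (h : ∀ d, ∃ r : ℚ, algebraMap ℚ K r = coeff d q) :
    ∃ q₀ : MvPolynomial σ ℚ, MvPolynomial.map (algebraMap ℚ K) q₀ = q := by
  classical
  refine ⟨∑ d ∈ q.support, monomial d (h d).choose, ?_⟩
  rw [map_sum]
  have : ∀ d ∈ q.support, (MvPolynomial.map (algebraMap ℚ K)) (monomial d (h d).choose)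
      = monomial d (coeff d q) := by
    intro d _
    rw [map_monomial, (h d).choose_spec]
  rw [Finset.sum_congr rfl this]
  exact support_sum_monomial_coeff q
lemma MvAux.step1 (m : ℕ) (F : MvPolynomial (Fin m) ℚ) (hF : Irreducible F)
    (p : Fin m → ℚ) (hp : eval p F = 0)
    (hsmooth : ∃ i : Fin m, eval p (pderiv i F) ≠ 0) :
    Irreducible (MvPolynomial.map (algebraMap ℚ (AlgebraicClosure ℚ)) F) := by
  classical
  obtain ⟨i, hi⟩ := hsmooth
  set K := AlgebraicClosure ℚ with hK
  have hF0 : F ≠ 0 := by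
    rintro rfl
    simp at hi
  set φ : ℚ →+* K := algebraMap ℚ K with hφ
  set FK := MvPolynomial.map φ F with hFKdef
  set pK : Fin m → K := fun j => φ (p j) with hpKdef
  -- transfer of evaluation along φ
  have evK : ∀ q : MvPolynomial (Fin m) ℚ, eval pK (MvPolynomial.map φ q) = φ (eval p q) := by
    intro q
    rw [eval_map]
    have h2 := eval₂_comp_left φ (RingHom.id ℚ) p q
    rw [eval₂_id] at h2
    rw [h2, RingHom.comp_id]
    rfl
  -- transfer of evaluation along automorphisms
  have evσ : ∀ σ : K ≃ₐ[ℚ] K, ∀ q : MvPolynomial (Fin m) K,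
      eval pK (MvPolynomial.map (σ : K →+* K) q) = σ (eval pK q) := by
    intro σ q
    rw [eval_map]
    have h2 := eval₂_comp_left (σ : K →+* K) (RingHom.id K) pK q
    rw [eval₂_id] at h2
    have h3 : (σ : K →+* K) ∘ pK = pK := by
      funext j
      exact σ.commutes (p j)
    rw [h3] at h2
    show eval₂ (↑σ) pK q = (σ : K →+* K) ((eval pK) q)
    rw [h2, RingHom.comp_id]
  have hφinj : Function.Injective φ := φ.injective
  have hFK0 : FK ≠ 0 := by
    intro h2
    exact hF0 (MvPolynomial.map_injective φ hφinj (by simpa using h2))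
  have hFKp : eval pK FK = 0 := by rw [hFKdef, evK, hp, map_zero]
  have hi' : eval pK (pderiv i FK) ≠ 0 := by
    rw [hFKdef, pderiv_map, evK]
    intro h2
    exact hi (hφinj (by simpa using h2))
  -- no two factors both vanish at the point
  have C1 : ∀ A B : MvPolynomial (Fin m) K, FK = A * B → eval pK A = 0 → eval pK B ≠ 0 := by
    intro A B hAB hA hB
    apply hi'
    rw [hAB, pderiv_mul, map_add, map_mul, map_mul, hA, hB]
    ring
  -- extract an irreducible factor vanishing at pK
  have : ∃ G : MvPolynomial (Fin m) K, Irreducible G ∧ G ∣ FK ∧ eval pK G = 0 := by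
    set fs := UniqueFactorizationMonoid.factors FK with hfs
    obtain ⟨u, hu⟩ := (UniqueFactorizationMonoid.factors_prod hFK0)
    have hprod : eval pK fs.prod * eval pK (u : MvPolynomial (Fin m) K) = 0 := by
      rw [← map_mul, hu, hFKp]
    have hune : eval pK (u : MvPolynomial (Fin m) K) ≠ 0 :=
      (u.isUnit.map (eval pK)).ne_zero
    have hps : eval pK fs.prod = 0 := by
      rcases mul_eq_zero.mp hprod with h2 | h2
      · exact h2
      · exact absurd h2 hune
    rw [map_multiset_prod] at hps
    obtain ⟨z, hz, hz0⟩ := by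
      have := Multiset.prod_eq_zero_iff.mp hps
      rw [Multiset.mem_map] at this
      exact this
    refine ⟨z, UniqueFactorizationMonoid.irreducible_of_factor z hz,
      UniqueFactorizationMonoid.dvd_of_mem_factors hz, hz0⟩
  obtain ⟨G, hGirr, hGdvd, hGp⟩ := this
  obtain ⟨H, hH⟩ := hGdvd
  have hHp : eval pK H ≠ 0 := C1 G H hH hGp
  have hG0 : G ≠ 0 := hGirr.ne_zero
  -- automorphisms fix FK
  have hmapFK : ∀ σ : K ≃ₐ[ℚ] K, MvPolynomial.map (σ : K →+* K) FK = FK := by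
    intro σ
    rw [hFKdef, MvPolynomial.map_map]
    have : (σ : K →+* K).comp φ = φ := RingHom.ext fun r => σ.commutes r
    rw [this]
  -- each conjugate of G is a constant multiple of G
  have hconj : ∀ σ : K ≃ₐ[ℚ] K, ∃ c : K, c ≠ 0 ∧
      MvPolynomial.map (σ : K →+* K) G = C c * G := by
    intro σ
    have hGσirr : Irreducible (MvPolynomial.map (σ : K →+* K) G) := by
      have := (MulEquiv.irreducible_iff
        (mapAlgEquiv (Fin m) (σ : K ≃ₐ[ℚ] K)).toMulEquiv).mpr hGirr
      simpa [mapAlgEquiv_apply] using this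
    have hGσp : eval pK (MvPolynomial.map (σ : K →+* K) G) = 0 := by
      rw [evσ, hGp, map_zero]
    have hGσprime : Prime (MvPolynomial.map (σ : K →+* K) G) :=
      (UniqueFactorizationMonoid.irreducible_iff_prime).mp hGσirr
    have hdvdGH : MvPolynomial.map (σ : K →+* K) G ∣ G * H :=
      ⟨MvPolynomial.map (σ : K →+* K) H, by rw [← map_mul, ← hH, hmapFK σ]⟩
    have hndvdH : ¬ (MvPolynomial.map (σ : K →+* K) G ∣ H) := by
      rintro ⟨H2, rfl⟩
      apply hHp
      rw [map_mul, hGσp, zero_mul]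
    have hdvdG : MvPolynomial.map (σ : K →+* K) G ∣ G := by
      rcases hGσprime.2.2 G H hdvdGH with h2 | h2
      · exact h2
      · exact absurd h2 hndvdH
    obtain ⟨w, hw⟩ := (hGσirr.associated_of_dvd hGirr hdvdG)
    obtain ⟨c, hcunit, hcC⟩ := (MvAux.isUnit_iff_C (w : MvPolynomial (Fin m) K)).mp w.isUnit
    refine ⟨c⁻¹, inv_ne_zero hcunit, ?_⟩
    have hGeq : G = MvPolynomial.map (σ : K →+* K) G * C c := by rw [← hcC, hw]
    conv_rhs => rw [hGeq]
    rw [mul_comm (MvPolynomial.map (σ : K →+* K) G) (C c), ← mul_assoc, ← C_mul,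
      inv_mul_cancel₀ hcunit, C_1, one_mul]
  -- normalize G by one of its coefficients
  obtain ⟨e, he⟩ := (support_nonempty (p := G)).mpr hG0
  set c := coeff e G with hc
  have hc0 : c ≠ 0 := mem_support_iff.mp he
  set Gh := C c⁻¹ * G with hGh
  set Hh := C c * H with hHh
  have hfact : FK = Gh * Hh := by
    calc FK = G * H := hH
    _ = (C (c⁻¹ * c) : MvPolynomial (Fin m) K) * (G * H) := by
        rw [inv_mul_cancel₀ hc0, C_1, one_mul]
    _ = Gh * Hh := by rw [hGh, hHh, C_mul]; ring
  have hGhfix : ∀ σ : K ≃ₐ[ℚ] K, MvPolynomial.map (σ : K →+* K) Gh = Gh := by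
    intro σ
    obtain ⟨cσ, hcσ0, hcσ⟩ := hconj σ
    have hcoeff : (σ : K →+* K) c = cσ * c := by
      have h3 := congrArg (coeff e) hcσ
      rw [coeff_map, coeff_C_mul] at h3
      exact h3
    rw [hGh, map_mul, hcσ, MvPolynomial.map_C]
    have h4 : (σ : K →+* K) c⁻¹ = (cσ * c)⁻¹ := by
      rw [map_inv₀, hcoeff]
    rw [h4, ← mul_assoc, ← C_mul]
    have h5 : (cσ * c)⁻¹ * cσ = c⁻¹ := by
      rw [mul_inv, mul_comm cσ⁻¹, mul_assoc, inv_mul_cancel₀ hcσ0, mul_one]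
    rw [h5]
  have hHhfix : ∀ σ : K ≃ₐ[ℚ] K, MvPolynomial.map (σ : K →+* K) Hh = Hh := by
    intro σ
    have hGh0 : Gh ≠ 0 := by
      rw [hGh]
      exact mul_ne_zero (by simpa using inv_ne_zero hc0) hG0
    refine mul_left_cancel₀ hGh0 ?_
    calc Gh * MvPolynomial.map (σ : K →+* K) Hh
        = MvPolynomial.map (σ : K →+* K) Gh * MvPolynomial.map (σ : K →+* K) Hh := by
          rw [hGhfix σ]
    _ = MvPolynomial.map (σ : K →+* K) (Gh * Hh) := (map_mul _ _ _).symm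
    _ = MvPolynomial.map (σ : K →+* K) FK := by rw [← hfact]
    _ = FK := hmapFK σ
    _ = Gh * Hh := hfact
  have hGhrat : ∀ d, ∃ r : ℚ, φ r = coeff d Gh := by
    intro d
    apply MvAux.fixed_mem_range
    intro σ
    have h3 := congrArg (coeff d) (hGhfix σ)
    rw [coeff_map] at h3
    exact h3
  have hHhrat : ∀ d, ∃ r : ℚ, φ r = coeff d Hh := by
    intro d
    apply MvAux.fixed_mem_range
    intro σ
    have h3 := congrArg (coeff d) (hHhfix σ)
    rw [coeff_map] at h3
    exact h3
  obtain ⟨G0, hG0map⟩ := MvAux.exists_preimage Gh hGhrat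
  obtain ⟨H0, hH0map⟩ := MvAux.exists_preimage Hh hHhrat
  have hFfact : F = G0 * H0 := by
    apply MvPolynomial.map_injective φ hφinj
    rw [map_mul, hG0map, hH0map, ← hfact]
  rcases hF.isUnit_or_isUnit hFfact with hu | hu
  · exfalso
    have hGhu : IsUnit Gh := by
      rw [← hG0map]
      exact hu.map (MvPolynomial.map φ)
    have hGu : IsUnit G := by
      have h6 : G = C c * Gh := by
        rw [hGh, ← mul_assoc, ← C_mul, mul_inv_cancel₀ hc0, C_1, one_mul]
      rw [h6]
      exact (hc0.isUnit.map (C : K →+* MvPolynomial (Fin m) K)).mul hGhu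
    exact hGirr.not_isUnit hGu
  · have hHhu : IsUnit Hh := by
      rw [← hH0map]
      exact hu.map (MvPolynomial.map φ)
    have hHu : IsUnit H := by
      have h6 : H = C c⁻¹ * Hh := by
        rw [hHh, ← mul_assoc, ← C_mul, inv_mul_cancel₀ hc0, C_1, one_mul]
      rw [h6]
      exact ((inv_ne_zero hc0).isUnit.map (C : K →+* MvPolynomial (Fin m) K)).mul hHhu
    have hassoc : Associated G FK := ⟨hHu.unit, by rw [IsUnit.unit_spec, ← hH]⟩
    exact hassoc.irreducible hGirr

/-- If `F ∈ ℚ[x_1,…,x_m]` is irreducible over `ℚ` and the hypersurface `F = 0` has a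
smooth `ℚ`-rational point `p`, then the image of `F` in `ℂ[x_1,…,x_m]` is irreducible
over `ℂ`. -/
theorem smooth_rational_point_upgrades_irreducibility
    (m : ℕ) (hm : 1 ≤ m) (F : MvPolynomial (Fin m) ℚ)
    (hF : Irreducible F)
    (p : Fin m → ℚ) (hp : eval p F = 0)
    (hsmooth : ∃ i : Fin m, eval p (pderiv i F) ≠ 0) :
    Irreducible (MvPolynomial.map (algebraMap ℚ ℂ) F) := by
  have h1 := MvAux.step1 m F hF p hp hsmooth
  let ι : AlgebraicClosure ℚ →ₐ[ℚ] ℂ := @IsAlgClosed.lift ℂ _ _ ℚ _ _ (AlgebraicClosure ℚ) _ _ _ _ _ _ (AlgebraicClosure.isAlgebraic ℚ)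
  have h2 := MvAux.irreducible_map ι.toRingHom _ h1
  have h3 : (ι.toRingHom).comp (algebraMap ℚ (AlgebraicClosure ℚ)) = algebraMap ℚ ℂ :=
    ι.comp_algebraMap
  rwa [MvPolynomial.map_map, h3] at h2
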